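/- Consequences of maximal violation (N-party): Let N ≥ 2, let A_{1,0}, A_{1,1} be Hermitian on ℂ^{d₁} and A_{n,0}, A_{n,1} Hermitian on ℂ^{d_n} (n = 2,…,N), all with squares ⪯ identity, let a ∈ {0,1}^N, and let ψ ∈ ℂ^{d₁} ⊗ ⋯ ⊗ ℂ^{d_N} be a unit vector with ⟨ψ| B̂_a |ψ⟩ = 2(N−1). Then: (1) ((−1)^{a₁} Ã_{1,1} ⊗ I) ψ = (I ⊗ A_{2,1} ⊗ ⋯ ⊗ A_{N,1}) ψ; (2) for every n = 2,…,N, ((−1)^{a₁+a_n} Ã_{1,0} ⊗ I) ψ = A_{n,0}^{(n)} ψ; and (3) (A_{1,i}² ⊗ I) ψ = ψ for i = 0,1, (I ⊗ A_{2,1}² ⊗ ⋯ ⊗ A_{N,1}²) ψ = ψ, and (A_{n,0}²)^{(n)} ψ = ψ for n = 2,…,N. -/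

import Mathlib

/-! Consequences of maximal violation of the N-party Bell inequality. -/

open Matrix Finset
open scoped Matrix Kronecker ComplexOrder

noncomputable section

def PauliX : Matrix (Fin 2) (Fin 2) ℂ := !![0, 1; 1, 0]

def PauliZ : Matrix (Fin 2) (Fin 2) ℂ := !![1, 0; 0, -1]

/-- `tildeA A 0 = (A₀ - A₁)/√2` and `tildeA A 1 = (A₀ + A₁)/√2`. -/
def tildeA {n : Type*} (A : Fin 2 → Matrix n n ℂ) (j : Fin 2) : Matrix n n ℂ :=
  (Real.sqrt 2 : ℂ)⁻¹ • (A 0 + (-1 : ℂ) ^ ((j : ℕ) + 1) • A 1)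

/-- Kronecker product of a family of matrices, on index `Π n, p n`. -/
def famKron {N : ℕ} {p q : Fin N → Type*} (M : ∀ n, Matrix (p n) (q n) ℂ) :
    Matrix (∀ n, p n) (∀ n, q n) ℂ :=
  Matrix.of fun s t => ∏ n, M n (s n) (t n)

/-- The N-party Bell operator
`B̂_a = (−1)^{a₁} [ (N−1) Ã_{1,1} ⊗ A_{2,1} ⊗ ⋯ ⊗ A_{N,1}
        + Σ_{n=2}^N (−1)^{a_n} Ã_{1,0} ⊗ A_{n,0}^{(n)} ]`,
where party `n` of the paper corresponds to index `n−1 : Fin N`. -/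
def NBell {N : ℕ} [NeZero N] {d : Fin N → ℕ}
    (A : ∀ n, Fin 2 → Matrix (Fin (d n)) (Fin (d n)) ℂ) (a : Fin N → Fin 2) :
    Matrix (∀ n, Fin (d n)) (∀ n, Fin (d n)) ℂ :=
  (-1 : ℂ) ^ (a 0 : ℕ) •
    (((N : ℂ) - 1) • famKron (Function.update (fun n => A n 1) 0 (tildeA (A 0) 1)) +
      ∑ n ∈ Finset.univ.erase 0, (-1 : ℂ) ^ (a n : ℕ) •
        famKron (Function.update
          (Function.update (fun m => (1 : Matrix (Fin (d m)) (Fin (d m)) ℂ))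
            0 (tildeA (A 0) 0)) n (A n 0)))

/-- The GHZ-like state `|φ_a⟩ = (|a₁ … a_N⟩ + (−1)^{a₁} |1−a₁ … 1−a_N⟩)/√2`. -/
def ghz {N : ℕ} [NeZero N] (a : Fin N → Fin 2) : (Fin N → Fin 2) → ℂ := fun s =>
  (Real.sqrt 2 : ℂ)⁻¹ *
    ((if s = a then 1 else 0) +
      (-1 : ℂ) ^ (a 0 : ℕ) * (if s = (fun n => a n + 1) then 1 else 0))

/-! auxiliary lemmas -/
namespace BellAux

variable {N : ℕ} {d : Fin N → ℕ}

lemma famKron_one : famKron (fun n => (1 : Matrix (Fin (d n)) (Fin (d n)) ℂ)) = 1 := by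
  ext s t
  simp only [famKron, Matrix.of_apply, Matrix.one_apply]
  by_cases h : s = t
  · subst h; simp
  · rw [if_neg h]
    obtain ⟨n, hn⟩ := Function.ne_iff.mp h
    exact Finset.prod_eq_zero (mem_univ n) (by simp [Matrix.one_apply, hn])

lemma famKron_mul (M P : ∀ n, Matrix (Fin (d n)) (Fin (d n)) ℂ) :
    famKron M * famKron P = famKron (fun n => M n * P n) := by
  ext s t
  simp only [famKron, Matrix.mul_apply, Matrix.of_apply]
  rw [Finset.prod_univ_sum, Fintype.piFinset_univ]
  exact Finset.sum_congr rfl fun u _ => Finset.prod_mul_distrib.symm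

lemma famKron_mul_eq {M P R : ∀ n, Matrix (Fin (d n)) (Fin (d n)) ℂ}
    (H : ∀ n, M n * P n = R n) : famKron M * famKron P = famKron R := by
  rw [famKron_mul]; exact congrArg famKron (funext H)

lemma famKron_conjTranspose (M : ∀ n, Matrix (Fin (d n)) (Fin (d n)) ℂ) :
    (famKron M)ᴴ = famKron (fun n => (M n)ᴴ) := by
  ext s t
  simp only [famKron, Matrix.conjTranspose_apply, Matrix.of_apply, star_prod]

lemma famKron_isHermitian {M : ∀ n, Matrix (Fin (d n)) (Fin (d n)) ℂ}
    (h : ∀ n, (M n).IsHermitian) : (famKron M).IsHermitian := by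
  unfold Matrix.IsHermitian
  rw [famKron_conjTranspose]
  exact congrArg famKron (funext h)

lemma famKron_posSemidef {M : ∀ n, Matrix (Fin (d n)) (Fin (d n)) ℂ}
    (h : ∀ n, (M n).PosSemidef) : (famKron M).PosSemidef := by
  choose B hB using fun n => (by open scoped MatrixOrder in
    exact ⟨CFC.sqrt (M n), by rw [(CFC.sqrt_nonneg (M n)).posSemidef.isHermitian.eq]; exact (CFC.sqrt_mul_sqrt_self (M n) (h n).nonneg).symm⟩ :
    ∃ B : Matrix (Fin (d n)) (Fin (d n)) ℂ, M n = Bᴴ * B)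
  have : famKron M = (famKron B)ᴴ * famKron B := by
    rw [famKron_conjTranspose, famKron_mul]
    exact congrArg famKron (funext hB)
  rw [this]
  exact posSemidef_conjTranspose_mul_self _

lemma famKron_update_add (M : ∀ n, Matrix (Fin (d n)) (Fin (d n)) ℂ) (k : Fin N)
    (B C : Matrix (Fin (d k)) (Fin (d k)) ℂ) :
    famKron (Function.update M k (B + C)) =
      famKron (Function.update M k B) + famKron (Function.update M k C) := by
  ext s t
  simp only [famKron, Matrix.of_apply, Matrix.add_apply]
  rw [← Finset.mul_prod_erase _ _ (mem_univ k), ← Finset.mul_prod_erase _ _ (mem_univ k),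
    ← Finset.mul_prod_erase _ _ (mem_univ k)]
  have hrest : ∀ (D : Matrix (Fin (d k)) (Fin (d k)) ℂ),
      (∏ n ∈ univ.erase k, Function.update M k D n (s n) (t n)) =
        ∏ n ∈ univ.erase k, M n (s n) (t n) := by
    intro D
    exact Finset.prod_congr rfl fun n hn => by
      rw [Function.update_of_ne (Finset.ne_of_mem_erase hn)]
  rw [hrest, hrest, hrest]
  simp only [Function.update_self, Matrix.add_apply]
  ring

lemma famKron_update_sub (M : ∀ n, Matrix (Fin (d n)) (Fin (d n)) ℂ) (k : Fin N)
    (B C : Matrix (Fin (d k)) (Fin (d k)) ℂ) :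
    famKron (Function.update M k (B - C)) =
      famKron (Function.update M k B) - famKron (Function.update M k C) := by
  have h := famKron_update_add M k C (B - C)
  rw [add_sub_cancel] at h
  rw [h]; abel

lemma one_sub_famKron_posSemidef {M : ∀ n, Matrix (Fin (d n)) (Fin (d n)) ℂ}
    (h1 : ∀ n, (M n).PosSemidef)
    (h2 : ∀ n, ((1 : Matrix (Fin (d n)) (Fin (d n)) ℂ) - M n).PosSemidef) :
    ((1 : Matrix (∀ n, Fin (d n)) (∀ n, Fin (d n)) ℂ) - famKron M).PosSemidef := by
  classical
  have key : ∀ s : Finset (Fin N),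
      ((1 : Matrix (∀ n, Fin (d n)) (∀ n, Fin (d n)) ℂ)
        - famKron (fun n => if n ∈ s then M n else 1)).PosSemidef := by
    intro s
    induction s using Finset.induction with
    | empty =>
        simp only [Finset.notMem_empty, if_false]
        rw [famKron_one, sub_self]
        exact Matrix.PosSemidef.zero
    | @insert k s hk ih =>
        set f : ∀ n, Matrix (Fin (d n)) (Fin (d n)) ℂ :=
          fun n => if n ∈ s then M n else 1 with hf
        have hfk : f k = 1 := by simp [hf, hk]
        have hins : (fun n => if n ∈ insert k s then M n else 1) = Function.update f k (M k) := by
          funext n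
          by_cases hn : n = k
          · subst hn; simp
          · simp [Function.update_of_ne hn, hf, Finset.mem_insert, hn]
        rw [hins]
        have hupd1 : Function.update f k (1 : Matrix (Fin (d k)) (Fin (d k)) ℂ) = f := by
          funext n; by_cases hn : n = k
          · subst hn; simp [hfk]
          · simp [Function.update_of_ne hn]
        have step : famKron f - famKron (Function.update f k (M k))
            = famKron (Function.update f k
                ((1 : Matrix (Fin (d k)) (Fin (d k)) ℂ) - M k)) := by
          rw [famKron_update_sub, hupd1]
        have decomp : (1 : Matrix (∀ n, Fin (d n)) (∀ n, Fin (d n)) ℂ)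
              - famKron (Function.update f k (M k))
            = ((1 : Matrix (∀ n, Fin (d n)) (∀ n, Fin (d n)) ℂ) - famKron f)
              + famKron (Function.update f k
                ((1 : Matrix (Fin (d k)) (Fin (d k)) ℂ) - M k)) := by
          rw [← step]; abel
        rw [decomp]
        refine ih.add (famKron_posSemidef ?_)
        intro n
        by_cases hn : n = k
        · subst hn; rw [Function.update_self]; exact h2 n
        · rw [Function.update_of_ne hn]
          by_cases hns : n ∈ s
          · simpa [hf, hns] using h1 n
          · simp only [hf, hns, if_false]
            exact Matrix.PosSemidef.one
  have := key Finset.univ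
  simpa using this

lemma star_sqrt2_inv : star ((Real.sqrt 2 : ℂ))⁻¹ = ((Real.sqrt 2 : ℂ))⁻¹ := by
  rw [star_inv₀]
  norm_num [Complex.star_def, Complex.conj_ofReal]

lemma sqrt2_inv_mul_self : ((Real.sqrt 2 : ℂ))⁻¹ * ((Real.sqrt 2 : ℂ))⁻¹ = 2⁻¹ := by
  rw [← mul_inv]
  congr 1
  norm_cast
  rw [Real.mul_self_sqrt]
  norm_num

lemma tildeA_isHermitian {n : Type*} {B : Fin 2 → Matrix n n ℂ}
    (h : ∀ i, (B i).IsHermitian) (j : Fin 2) : (tildeA B j).IsHermitian := by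
  unfold tildeA Matrix.IsHermitian
  rw [Matrix.conjTranspose_smul, Matrix.conjTranspose_add, Matrix.conjTranspose_smul,
    (h 0).eq, (h 1).eq, star_sqrt2_inv]
  congr 2
  rw [star_pow, star_neg, star_one]

lemma tildeA_sq_add {n : Type*} [Fintype n] (B : Fin 2 → Matrix n n ℂ) :
    tildeA B 0 * tildeA B 0 + tildeA B 1 * tildeA B 1 = B 0 * B 0 + B 1 * B 1 := by
  unfold tildeA
  have h0 : (((0 : Fin 2) : ℕ) + 1) = 1 := rfl
  have h1 : (((1 : Fin 2) : ℕ) + 1) = 2 := rfl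
  rw [h0, h1]
  have e0 : B 0 + (-1 : ℂ) ^ 1 • B 1 = B 0 - B 1 := by
    rw [pow_one, neg_one_smul, ← sub_eq_add_neg]
  have e1 : B 0 + (-1 : ℂ) ^ 2 • B 1 = B 0 + B 1 := by
    rw [neg_one_sq, one_smul]
  rw [e0, e1, smul_mul_smul_comm, smul_mul_smul_comm, ← smul_add, sqrt2_inv_mul_self]
  have : (B 0 - B 1) * (B 0 - B 1) + (B 0 + B 1) * (B 0 + B 1)
      = (2 : ℂ) • (B 0 * B 0 + B 1 * B 1) := by
    rw [two_smul]
    noncomm_ring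
  rw [this, smul_smul]
  norm_num

variable {m : Type*} [Fintype m]

def ee (ψ : m → ℂ) (M : Matrix m m ℂ) : ℂ := star ψ ⬝ᵥ M *ᵥ ψ

lemma ee_add (ψ : m → ℂ) (M P : Matrix m m ℂ) : ee ψ (M + P) = ee ψ M + ee ψ P := by
  simp [ee, Matrix.add_mulVec, dotProduct_add]

lemma ee_sub (ψ : m → ℂ) (M P : Matrix m m ℂ) : ee ψ (M - P) = ee ψ M - ee ψ P := by
  simp [ee, Matrix.sub_mulVec, dotProduct_sub]

lemma ee_smul (ψ : m → ℂ) (c : ℂ) (M : Matrix m m ℂ) : ee ψ (c • M) = c * ee ψ M := by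
  simp [ee, Matrix.smul_mulVec, dotProduct_smul, smul_eq_mul]

lemma ee_sum (ψ : m → ℂ) {ι : Type*} (s : Finset ι) (M : ι → Matrix m m ℂ) :
    ee ψ (∑ i ∈ s, M i) = ∑ i ∈ s, ee ψ (M i) := by
  classical
  induction s using Finset.induction with
  | empty => simp [ee]
  | @insert k s hk ih => rw [Finset.sum_insert hk, Finset.sum_insert hk, ee_add, ih]

lemma ee_one [DecidableEq m] {ψ : m → ℂ} (hψ : star ψ ⬝ᵥ ψ = 1) : ee ψ 1 = 1 := by
  simp [ee, Matrix.one_mulVec, hψ]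

lemma ee_nonneg {M : Matrix m m ℂ} (h : M.PosSemidef) (ψ : m → ℂ) : 0 ≤ ee ψ M := h.dotProduct_mulVec_nonneg ψ

lemma mulVec_eq_zero_of_ee_eq_zero {ψ : m → ℂ} {M : Matrix m m ℂ}
    (h : ee ψ (Mᴴ * M) = 0) : M *ᵥ ψ = 0 := by
  rwa [ee, ← Matrix.mulVec_mulVec, Matrix.dotProduct_mulVec, Matrix.vecMul_conjTranspose,
    star_star, dotProduct_star_self_eq_zero] at h

lemma mulVec_eq_zero_of_posSemidef_ee {ψ : m → ℂ} {M : Matrix m m ℂ} [DecidableEq m]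
    (hM : M.PosSemidef) (h : ee ψ M = 0) : M *ᵥ ψ = 0 :=
  (hM.dotProduct_mulVec_zero_iff ψ).mp h

lemma five_nonneg_sum_zero {x1 x2 x3 x4 x5 : ℂ} (h1 : 0 ≤ x1) (h2 : 0 ≤ x2)
    (h3 : 0 ≤ x3) (h4 : 0 ≤ x4) (h5 : 0 ≤ x5)
    (h : x1 + x2 + x3 + x4 + x5 = 0) :
    x1 = 0 ∧ x2 = 0 ∧ x3 = 0 ∧ x4 = 0 ∧ x5 = 0 := by
  obtain ⟨h1234, e5⟩ := (add_eq_zero_iff_of_nonneg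
    (add_nonneg (add_nonneg (add_nonneg h1 h2) h3) h4) h5).mp h
  obtain ⟨h123, e4⟩ := (add_eq_zero_iff_of_nonneg
    (add_nonneg (add_nonneg h1 h2) h3) h4).mp h1234
  obtain ⟨h12, e3⟩ := (add_eq_zero_iff_of_nonneg (add_nonneg h1 h2) h3).mp h123
  obtain ⟨e1, e2⟩ := (add_eq_zero_iff_of_nonneg h1 h2).mp h12
  exact ⟨e1, e2, e3, e4, e5⟩

end BellAux

theorem maximal_violation_consequences_N_party (N : ℕ) [NeZero N] (hN : 2 ≤ N)
    (d : Fin N → ℕ)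
    (A : ∀ n, Fin 2 → Matrix (Fin (d n)) (Fin (d n)) ℂ)
    (hAh : ∀ n x, (A n x).IsHermitian)
    (hAc : ∀ n x, ((1 : Matrix (Fin (d n)) (Fin (d n)) ℂ) - A n x ^ 2).PosSemidef)
    (a : Fin N → Fin 2) (ψ : (∀ n, Fin (d n)) → ℂ)
    (hψ : star ψ ⬝ᵥ ψ = 1)
    (hmax : star ψ ⬝ᵥ (NBell A a) *ᵥ ψ = 2 * ((N : ℂ) - 1)) :
    -- (1)
    (((-1 : ℂ) ^ (a 0 : ℕ) •
        famKron (Function.update (fun m => (1 : Matrix (Fin (d m)) (Fin (d m)) ℂ))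
          0 (tildeA (A 0) 1))) *ᵥ ψ
      = famKron (Function.update (fun n => A n 1)
          0 (1 : Matrix (Fin (d 0)) (Fin (d 0)) ℂ)) *ᵥ ψ) ∧
    -- (2)
    (∀ n : Fin N, n ≠ 0 →
      ((-1 : ℂ) ^ ((a 0 : ℕ) + (a n : ℕ)) •
          famKron (Function.update (fun m => (1 : Matrix (Fin (d m)) (Fin (d m)) ℂ))
            0 (tildeA (A 0) 0))) *ᵥ ψ
        = famKron (Function.update (fun m => (1 : Matrix (Fin (d m)) (Fin (d m)) ℂ))
            n (A n 0)) *ᵥ ψ) ∧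
    -- (3)
    (∀ i : Fin 2,
      famKron (Function.update (fun m => (1 : Matrix (Fin (d m)) (Fin (d m)) ℂ))
          0 (A 0 i ^ 2)) *ᵥ ψ = ψ) ∧
    (famKron (Function.update (fun n => A n 1 ^ 2)
        0 (1 : Matrix (Fin (d 0)) (Fin (d 0)) ℂ)) *ᵥ ψ = ψ) ∧
    (∀ n : Fin N, n ≠ 0 →
      famKron (Function.update (fun m => (1 : Matrix (Fin (d m)) (Fin (d m)) ℂ))
          n (A n 0 ^ 2)) *ᵥ ψ = ψ) := by
  classical
  simp only [pow_two] at hAc ⊢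
  have h1N : (1:ℕ) ≤ N := le_trans one_le_two hN
  have hNcast : ((N:ℂ) - 1) = ((N - 1 : ℕ) : ℂ) := by
    push_cast [Nat.cast_sub h1N]; ring
  have hNC : ((N:ℂ) - 1) ≠ 0 := by
    rw [hNcast]
    norm_cast
    omega
  have hNCnonneg : (0:ℂ) ≤ ((N:ℂ) - 1) := by
    rw [hNcast]
    rw [Complex.le_def]
    simp
  -- basic sign facts
  have hstar1 : star ((-1 : ℂ) ^ (a 0 : ℕ)) = (-1 : ℂ) ^ (a 0 : ℕ) := by
    rw [star_pow, star_neg, star_one]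
  have hsq : ∀ k : ℕ, (-1:ℂ)^k * (-1:ℂ)^k = 1 := fun k => by
    rw [← pow_add]; exact Even.neg_one_pow ⟨k, rfl⟩
  -- hermiticity facts
  have hXh : ∀ i : Fin 2, (tildeA (A 0) i).IsHermitian :=
    BellAux.tildeA_isHermitian (fun i => hAh 0 i)
  have hT1h : (famKron (Function.update (fun m => (1 : Matrix (Fin (d m)) (Fin (d m)) ℂ)) 0 (tildeA (A 0) 1))).IsHermitian := by
    refine BellAux.famKron_isHermitian (fun n => ?_)
    by_cases hn : n = 0
    · subst hn; rw [Function.update_self]; exact hXh 1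
    · rw [Function.update_of_ne hn]; exact Matrix.isHermitian_one
  have hT0h : (famKron (Function.update (fun m => (1 : Matrix (Fin (d m)) (Fin (d m)) ℂ)) 0 (tildeA (A 0) 0))).IsHermitian := by
    refine BellAux.famKron_isHermitian (fun n => ?_)
    by_cases hn : n = 0
    · subst hn; rw [Function.update_self]; exact hXh 0
    · rw [Function.update_of_ne hn]; exact Matrix.isHermitian_one
  have hS1h : (famKron (Function.update (fun n => A n 1) 0 (1 : Matrix (Fin (d 0)) (Fin (d 0)) ℂ))).IsHermitian := by
    refine BellAux.famKron_isHermitian (fun n => ?_)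
    by_cases hn : n = 0
    · subst hn; rw [Function.update_self]; exact Matrix.isHermitian_one
    · rw [Function.update_of_ne hn]; exact hAh n 1
  have hSNh : ∀ n : Fin N, (famKron (Function.update (fun m => (1 : Matrix (Fin (d m)) (Fin (d m)) ℂ)) n (A n 0))).IsHermitian := by
    intro n
    refine BellAux.famKron_isHermitian (fun p => ?_)
    by_cases hp : p = n
    · subst hp; rw [Function.update_self]; exact hAh p 0
    · rw [Function.update_of_ne hp]; exact Matrix.isHermitian_one
  -- PSD of squares
  have hA_psd : ∀ n x, (A n x * A n x).PosSemidef := fun n x => by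
    have h := Matrix.posSemidef_conjTranspose_mul_self (A n x)
    rwa [(hAh n x).eq] at h
  -- multiplication identities
  have hM1 : famKron (Function.update (fun m => (1 : Matrix (Fin (d m)) (Fin (d m)) ℂ)) 0 (tildeA (A 0) 1)) * famKron (Function.update (fun n => A n 1) 0 (1 : Matrix (Fin (d 0)) (Fin (d 0)) ℂ)) = famKron (Function.update (fun n => A n 1) 0 (tildeA (A 0) 1)) := by
    refine BellAux.famKron_mul_eq (fun n => ?_)
    by_cases hn : n = 0
    · subst hn; simp
    · simp [Function.update_of_ne hn]
  have hM2 : famKron (Function.update (fun n => A n 1) 0 (1 : Matrix (Fin (d 0)) (Fin (d 0)) ℂ)) * famKron (Function.update (fun m => (1 : Matrix (Fin (d m)) (Fin (d m)) ℂ)) 0 (tildeA (A 0) 1)) = famKron (Function.update (fun n => A n 1) 0 (tildeA (A 0) 1)) := by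
    refine BellAux.famKron_mul_eq (fun n => ?_)
    by_cases hn : n = 0
    · subst hn; simp
    · simp [Function.update_of_ne hn]
  have hM3 : famKron (Function.update (fun m => (1 : Matrix (Fin (d m)) (Fin (d m)) ℂ)) 0 (tildeA (A 0) 1)) * famKron (Function.update (fun m => (1 : Matrix (Fin (d m)) (Fin (d m)) ℂ)) 0 (tildeA (A 0) 1)) = famKron (Function.update (fun m => (1 : Matrix (Fin (d m)) (Fin (d m)) ℂ)) 0 (tildeA (A 0) 1 * tildeA (A 0) 1)) := by
    refine BellAux.famKron_mul_eq (fun n => ?_)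
    by_cases hn : n = 0
    · subst hn; simp
    · simp [Function.update_of_ne hn]
  have hM7 : famKron (Function.update (fun m => (1 : Matrix (Fin (d m)) (Fin (d m)) ℂ)) 0 (tildeA (A 0) 0)) * famKron (Function.update (fun m => (1 : Matrix (Fin (d m)) (Fin (d m)) ℂ)) 0 (tildeA (A 0) 0)) = famKron (Function.update (fun m => (1 : Matrix (Fin (d m)) (Fin (d m)) ℂ)) 0 (tildeA (A 0) 0 * tildeA (A 0) 0)) := by
    refine BellAux.famKron_mul_eq (fun n => ?_)
    by_cases hn : n = 0
    · subst hn; simp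
    · simp [Function.update_of_ne hn]
  have hM4 : famKron (Function.update (fun n => A n 1) 0 (1 : Matrix (Fin (d 0)) (Fin (d 0)) ℂ)) * famKron (Function.update (fun n => A n 1) 0 (1 : Matrix (Fin (d 0)) (Fin (d 0)) ℂ)) = famKron (Function.update (fun n => A n 1 * A n 1) 0 (1 : Matrix (Fin (d 0)) (Fin (d 0)) ℂ)) := by
    refine BellAux.famKron_mul_eq (fun n => ?_)
    by_cases hn : n = 0
    · subst hn; simp
    · simp [Function.update_of_ne hn]
  have hM5 : ∀ n : Fin N, n ≠ 0 → famKron (Function.update (fun m => (1 : Matrix (Fin (d m)) (Fin (d m)) ℂ)) 0 (tildeA (A 0) 0)) * famKron (Function.update (fun m => (1 : Matrix (Fin (d m)) (Fin (d m)) ℂ)) n (A n 0)) = famKron (Function.update (Function.update (fun m => (1 : Matrix (Fin (d m)) (Fin (d m)) ℂ)) 0 (tildeA (A 0) 0)) n (A n 0)) := by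
    intro n hn
    refine BellAux.famKron_mul_eq (fun p => ?_)
    rcases eq_or_ne p 0 with rfl | h0
    · simp [Function.update_of_ne (Ne.symm hn)]
    · rcases eq_or_ne p n with rfl | hpn
      · simp [Function.update_of_ne hn]
      · simp [Function.update_of_ne h0, Function.update_of_ne hpn]
  have hM6 : ∀ n : Fin N, n ≠ 0 → famKron (Function.update (fun m => (1 : Matrix (Fin (d m)) (Fin (d m)) ℂ)) n (A n 0)) * famKron (Function.update (fun m => (1 : Matrix (Fin (d m)) (Fin (d m)) ℂ)) 0 (tildeA (A 0) 0)) = famKron (Function.update (Function.update (fun m => (1 : Matrix (Fin (d m)) (Fin (d m)) ℂ)) 0 (tildeA (A 0) 0)) n (A n 0)) := by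
    intro n hn
    refine BellAux.famKron_mul_eq (fun p => ?_)
    rcases eq_or_ne p 0 with rfl | h0
    · simp [Function.update_of_ne (Ne.symm hn)]
    · rcases eq_or_ne p n with rfl | hpn
      · simp [Function.update_of_ne hn]
      · simp [Function.update_of_ne h0, Function.update_of_ne hpn]
  have hM8 : ∀ n : Fin N, famKron (Function.update (fun m => (1 : Matrix (Fin (d m)) (Fin (d m)) ℂ)) n (A n 0)) * famKron (Function.update (fun m => (1 : Matrix (Fin (d m)) (Fin (d m)) ℂ)) n (A n 0)) = famKron (Function.update (fun m => (1 : Matrix (Fin (d m)) (Fin (d m)) ℂ)) n (A n 0 * A n 0)) := by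
    intro n
    refine BellAux.famKron_mul_eq (fun p => ?_)
    by_cases hp : p = n
    · subst hp; simp
    · simp [Function.update_of_ne hp]

  -- P and Q hermitian and their squares
  have hPh : (((-1 : ℂ) ^ (a 0 : ℕ) • famKron (Function.update (fun m => (1 : Matrix (Fin (d m)) (Fin (d m)) ℂ)) 0 (tildeA (A 0) 1)) - famKron (Function.update (fun n => A n 1) 0 (1 : Matrix (Fin (d 0)) (Fin (d 0)) ℂ)))).IsHermitian := by
    unfold Matrix.IsHermitian
    rw [Matrix.conjTranspose_sub, Matrix.conjTranspose_smul, hstar1, hT1h.eq, hS1h.eq]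
  have hQh : ∀ n : Fin N, ((((-1 : ℂ) ^ (a 0 : ℕ) * (-1 : ℂ) ^ (a n : ℕ)) • famKron (Function.update (fun m => (1 : Matrix (Fin (d m)) (Fin (d m)) ℂ)) 0 (tildeA (A 0) 0)) - famKron (Function.update (fun m => (1 : Matrix (Fin (d m)) (Fin (d m)) ℂ)) n (A n 0)))).IsHermitian := by
    intro n
    unfold Matrix.IsHermitian
    have hsc : star ((-1 : ℂ) ^ (a 0 : ℕ) * (-1 : ℂ) ^ (a n : ℕ)) = (-1 : ℂ) ^ (a 0 : ℕ) * (-1 : ℂ) ^ (a n : ℕ) := by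
      rw [StarMul.star_mul, star_pow, star_pow, star_neg, star_one, mul_comm]
    rw [Matrix.conjTranspose_sub, Matrix.conjTranspose_smul, hsc, hT0h.eq, (hSNh n).eq]
  have hPP : (((-1 : ℂ) ^ (a 0 : ℕ) • famKron (Function.update (fun m => (1 : Matrix (Fin (d m)) (Fin (d m)) ℂ)) 0 (tildeA (A 0) 1)) - famKron (Function.update (fun n => A n 1) 0 (1 : Matrix (Fin (d 0)) (Fin (d 0)) ℂ))))ᴴ * (((-1 : ℂ) ^ (a 0 : ℕ) • famKron (Function.update (fun m => (1 : Matrix (Fin (d m)) (Fin (d m)) ℂ)) 0 (tildeA (A 0) 1)) - famKron (Function.update (fun n => A n 1) 0 (1 : Matrix (Fin (d 0)) (Fin (d 0)) ℂ))))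
      = famKron (Function.update (fun m => (1 : Matrix (Fin (d m)) (Fin (d m)) ℂ)) 0 (tildeA (A 0) 1 * tildeA (A 0) 1)) + famKron (Function.update (fun n => A n 1 * A n 1) 0 (1 : Matrix (Fin (d 0)) (Fin (d 0)) ℂ)) - ((2:ℂ) * (-1 : ℂ) ^ (a 0 : ℕ)) • famKron (Function.update (fun n => A n 1) 0 (tildeA (A 0) 1)) := by
    rw [hPh.eq, Matrix.sub_mul, Matrix.mul_sub, Matrix.mul_sub, smul_mul_smul_comm,
      hsq, one_smul, smul_mul_assoc, mul_smul_comm, hM1, hM2, hM3, hM4, two_mul, add_smul]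
    abel
  have hQQ : ∀ n : Fin N, n ≠ 0 → ((((-1 : ℂ) ^ (a 0 : ℕ) * (-1 : ℂ) ^ (a n : ℕ)) • famKron (Function.update (fun m => (1 : Matrix (Fin (d m)) (Fin (d m)) ℂ)) 0 (tildeA (A 0) 0)) - famKron (Function.update (fun m => (1 : Matrix (Fin (d m)) (Fin (d m)) ℂ)) n (A n 0))))ᴴ * ((((-1 : ℂ) ^ (a 0 : ℕ) * (-1 : ℂ) ^ (a n : ℕ)) • famKron (Function.update (fun m => (1 : Matrix (Fin (d m)) (Fin (d m)) ℂ)) 0 (tildeA (A 0) 0)) - famKron (Function.update (fun m => (1 : Matrix (Fin (d m)) (Fin (d m)) ℂ)) n (A n 0))))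
      = famKron (Function.update (fun m => (1 : Matrix (Fin (d m)) (Fin (d m)) ℂ)) 0 (tildeA (A 0) 0 * tildeA (A 0) 0)) + famKron (Function.update (fun m => (1 : Matrix (Fin (d m)) (Fin (d m)) ℂ)) n (A n 0 * A n 0)) - ((2:ℂ) * ((-1 : ℂ) ^ (a 0 : ℕ) * (-1 : ℂ) ^ (a n : ℕ))) • famKron (Function.update (Function.update (fun m => (1 : Matrix (Fin (d m)) (Fin (d m)) ℂ)) 0 (tildeA (A 0) 0)) n (A n 0)) := by
    intro n hn
    have hsc : ((-1 : ℂ) ^ (a 0 : ℕ) * (-1 : ℂ) ^ (a n : ℕ)) * ((-1 : ℂ) ^ (a 0 : ℕ) * (-1 : ℂ) ^ (a n : ℕ)) = 1 := by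
      rw [mul_mul_mul_comm, hsq, hsq, mul_one]
    rw [(hQh n).eq, Matrix.sub_mul, Matrix.mul_sub, Matrix.mul_sub, smul_mul_smul_comm,
      hsc, one_smul, smul_mul_assoc, mul_smul_comm, hM5 n hn, hM6 n hn, hM7, hM8, two_mul,
      add_smul]
    abel
  -- expectation of the Bell operator
  have hmax' : (-1 : ℂ) ^ (a 0 : ℕ) * (((N:ℂ) - 1) * BellAux.ee ψ (famKron (Function.update (fun n => A n 1) 0 (tildeA (A 0) 1)))
      + ∑ n ∈ Finset.univ.erase (0 : Fin N), (-1 : ℂ) ^ (a n : ℕ) * BellAux.ee ψ (famKron (Function.update (Function.update (fun m => (1 : Matrix (Fin (d m)) (Fin (d m)) ℂ)) 0 (tildeA (A 0) 0)) n (A n 0)))) = 2 * ((N:ℂ) - 1) := by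
    have h0 : BellAux.ee ψ (NBell A a) = 2 * ((N:ℂ) - 1) := hmax
    unfold NBell at h0
    simp only [BellAux.ee_smul, BellAux.ee_add, BellAux.ee_sum] at h0
    exact h0

  -- PSD facts for slack operators
  have pG : ∀ i : Fin 2, ((1 : Matrix (∀ n, Fin (d n)) (∀ n, Fin (d n)) ℂ) - famKron (Function.update (fun m => (1 : Matrix (Fin (d m)) (Fin (d m)) ℂ)) 0 (A 0 i * A 0 i))).PosSemidef := by
    intro i
    refine BellAux.one_sub_famKron_posSemidef (fun n => ?_) (fun n => ?_)
    · by_cases hn : n = 0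
      · subst hn; rw [Function.update_self]; exact hA_psd 0 i
      · rw [Function.update_of_ne hn]; exact Matrix.PosSemidef.one
    · by_cases hn : n = 0
      · subst hn; rw [Function.update_self]; exact hAc 0 i
      · rw [Function.update_of_ne hn, sub_self]; exact Matrix.PosSemidef.zero
  have pS1 : ((1 : Matrix (∀ n, Fin (d n)) (∀ n, Fin (d n)) ℂ) - famKron (Function.update (fun n => A n 1 * A n 1) 0 (1 : Matrix (Fin (d 0)) (Fin (d 0)) ℂ))).PosSemidef := by
    refine BellAux.one_sub_famKron_posSemidef (fun n => ?_) (fun n => ?_)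
    · by_cases hn : n = 0
      · subst hn; rw [Function.update_self]; exact Matrix.PosSemidef.one
      · rw [Function.update_of_ne hn]; exact hA_psd n 1
    · by_cases hn : n = 0
      · subst hn; rw [Function.update_self, sub_self]; exact Matrix.PosSemidef.zero
      · rw [Function.update_of_ne hn]; exact hAc n 1
  have pSN : ∀ n : Fin N, ((1 : Matrix (∀ n, Fin (d n)) (∀ n, Fin (d n)) ℂ) - famKron (Function.update (fun m => (1 : Matrix (Fin (d m)) (Fin (d m)) ℂ)) n (A n 0 * A n 0))).PosSemidef := by
    intro n
    refine BellAux.one_sub_famKron_posSemidef (fun p => ?_) (fun p => ?_)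
    · by_cases hp : p = n
      · subst hp; rw [Function.update_self]; exact hA_psd p 0
      · rw [Function.update_of_ne hp]; exact Matrix.PosSemidef.one
    · by_cases hp : p = n
      · subst hp; rw [Function.update_self]; exact hAc p 0
      · rw [Function.update_of_ne hp, sub_self]; exact Matrix.PosSemidef.zero
  -- G sum identity
  have hGsum : BellAux.ee ψ (famKron (Function.update (fun m => (1 : Matrix (Fin (d m)) (Fin (d m)) ℂ)) 0 (A 0 0 * A 0 0))) + BellAux.ee ψ (famKron (Function.update (fun m => (1 : Matrix (Fin (d m)) (Fin (d m)) ℂ)) 0 (A 0 1 * A 0 1)))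
      = BellAux.ee ψ (famKron (Function.update (fun m => (1 : Matrix (Fin (d m)) (Fin (d m)) ℂ)) 0 (tildeA (A 0) 0 * tildeA (A 0) 0))) + BellAux.ee ψ (famKron (Function.update (fun m => (1 : Matrix (Fin (d m)) (Fin (d m)) ℂ)) 0 (tildeA (A 0) 1 * tildeA (A 0) 1))) := by
    rw [← BellAux.ee_add, ← BellAux.ee_add, ← BellAux.famKron_update_add,
      ← BellAux.famKron_update_add, ← BellAux.tildeA_sq_add (A 0)]
  -- expectation expansions
  have hu : BellAux.ee ψ ((((-1 : ℂ) ^ (a 0 : ℕ) • famKron (Function.update (fun m => (1 : Matrix (Fin (d m)) (Fin (d m)) ℂ)) 0 (tildeA (A 0) 1)) - famKron (Function.update (fun n => A n 1) 0 (1 : Matrix (Fin (d 0)) (Fin (d 0)) ℂ))))ᴴ * (((-1 : ℂ) ^ (a 0 : ℕ) • famKron (Function.update (fun m => (1 : Matrix (Fin (d m)) (Fin (d m)) ℂ)) 0 (tildeA (A 0) 1)) - famKron (Function.update (fun n => A n 1) 0 (1 : Matrix (Fin (d 0)) (Fin (d 0)) ℂ)))))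
      = BellAux.ee ψ (famKron (Function.update (fun m => (1 : Matrix (Fin (d m)) (Fin (d m)) ℂ)) 0 (tildeA (A 0) 1 * tildeA (A 0) 1))) + BellAux.ee ψ (famKron (Function.update (fun n => A n 1 * A n 1) 0 (1 : Matrix (Fin (d 0)) (Fin (d 0)) ℂ))) - (2 * (-1 : ℂ) ^ (a 0 : ℕ)) * BellAux.ee ψ (famKron (Function.update (fun n => A n 1) 0 (tildeA (A 0) 1))) := by
    rw [hPP, BellAux.ee_sub, BellAux.ee_add, BellAux.ee_smul]
  have hv : ∀ n ∈ Finset.univ.erase (0 : Fin N), BellAux.ee ψ (((((-1 : ℂ) ^ (a 0 : ℕ) * (-1 : ℂ) ^ (a n : ℕ)) • famKron (Function.update (fun m => (1 : Matrix (Fin (d m)) (Fin (d m)) ℂ)) 0 (tildeA (A 0) 0)) - famKron (Function.update (fun m => (1 : Matrix (Fin (d m)) (Fin (d m)) ℂ)) n (A n 0))))ᴴ * ((((-1 : ℂ) ^ (a 0 : ℕ) * (-1 : ℂ) ^ (a n : ℕ)) • famKron (Function.update (fun m => (1 : Matrix (Fin (d m)) (Fin (d m)) ℂ)) 0 (tildeA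 (A 0) 0)) - famKron (Function.update (fun m => (1 : Matrix (Fin (d m)) (Fin (d m)) ℂ)) n (A n 0)))))
      = BellAux.ee ψ (famKron (Function.update (fun m => (1 : Matrix (Fin (d m)) (Fin (d m)) ℂ)) 0 (tildeA (A 0) 0 * tildeA (A 0) 0))) + BellAux.ee ψ (famKron (Function.update (fun m => (1 : Matrix (Fin (d m)) (Fin (d m)) ℂ)) n (A n 0 * A n 0)))
        - (2 * (-1 : ℂ) ^ (a 0 : ℕ)) * ((-1 : ℂ) ^ (a n : ℕ) * BellAux.ee ψ (famKron (Function.update (Function.update (fun m => (1 : Matrix (Fin (d m)) (Fin (d m)) ℂ)) 0 (tildeA (A 0) 0)) n (A n 0)))) := by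
    intro n hn
    rw [hQQ n (Finset.mem_erase.mp hn).1, BellAux.ee_sub, BellAux.ee_add, BellAux.ee_smul]
    ring
  -- counting
  have hcard : (((Finset.univ.erase (0 : Fin N)).card : ℕ) : ℂ) = (N:ℂ) - 1 := by
    rw [Finset.card_erase_of_mem (Finset.mem_univ 0), Finset.card_univ, Fintype.card_fin]
    rw [hNcast]
  have hQsum : ∑ n ∈ Finset.univ.erase (0 : Fin N), BellAux.ee ψ (((((-1 : ℂ) ^ (a 0 : ℕ) * (-1 : ℂ) ^ (a n : ℕ)) • famKron (Function.update (fun m => (1 : Matrix (Fin (d m)) (Fin (d m)) ℂ)) 0 (tildeA (A 0) 0)) - famKron (Function.update (fun m => (1 : Matrix (Fin (d m)) (Fin (d m)) ℂ)) n (A n 0))))ᴴ * ((((-1 : ℂ) ^ (a 0 : ℕ) * (-1 : ℂ) ^ (a n : ℕ)) • famKron (Function.update (fun m => (1 : Matrix (Fin (d m)) (Fin (d m)) ℂ)) 0 (tildeA (A 0) 0)) - famKron (Function.update (fun m => (1 : Matrix (Fin (d m)) (Fin (d m)) ℂ)) n (A n 0)))))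
      = ((N:ℂ) - 1) * BellAux.ee ψ (famKron (Function.update (fun m => (1 : Matrix (Fin (d m)) (Fin (d m)) ℂ)) 0 (tildeA (A 0) 0 * tildeA (A 0) 0))) + (∑ n ∈ Finset.univ.erase (0 : Fin N), BellAux.ee ψ (famKron (Function.update (fun m => (1 : Matrix (Fin (d m)) (Fin (d m)) ℂ)) n (A n 0 * A n 0))))
        - (2 * (-1 : ℂ) ^ (a 0 : ℕ)) * (∑ n ∈ Finset.univ.erase (0 : Fin N), (-1 : ℂ) ^ (a n : ℕ) * BellAux.ee ψ (famKron (Function.update (Function.update (fun m => (1 : Matrix (Fin (d m)) (Fin (d m)) ℂ)) 0 (tildeA (A 0) 0)) n (A n 0)))) := by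
    rw [Finset.sum_congr rfl hv, Finset.sum_sub_distrib, Finset.sum_add_distrib,
      Finset.sum_const, ← Finset.mul_sum, nsmul_eq_mul, hcard]
  have hR3sum : ∑ n ∈ Finset.univ.erase (0 : Fin N), BellAux.ee ψ ((1 : Matrix (∀ n, Fin (d n)) (∀ n, Fin (d n)) ℂ) - famKron (Function.update (fun m => (1 : Matrix (Fin (d m)) (Fin (d m)) ℂ)) n (A n 0 * A n 0)))
      = ((N:ℂ) - 1) - ∑ n ∈ Finset.univ.erase (0 : Fin N), BellAux.ee ψ (famKron (Function.update (fun m => (1 : Matrix (Fin (d m)) (Fin (d m)) ℂ)) n (A n 0 * A n 0))) := by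
    rw [Finset.sum_congr rfl (fun n _ => by
      rw [BellAux.ee_sub, BellAux.ee_one hψ] :
        ∀ n ∈ Finset.univ.erase (0 : Fin N), BellAux.ee ψ ((1 : Matrix (∀ n, Fin (d n)) (∀ n, Fin (d n)) ℂ) - famKron (Function.update (fun m => (1 : Matrix (Fin (d m)) (Fin (d m)) ℂ)) n (A n 0 * A n 0))) = 1 - BellAux.ee ψ (famKron (Function.update (fun m => (1 : Matrix (Fin (d m)) (Fin (d m)) ℂ)) n (A n 0 * A n 0)))),
      Finset.sum_sub_distrib, Finset.sum_const, nsmul_eq_mul, hcard, mul_one]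
  -- the master identity
  have key : ((N:ℂ) - 1) * BellAux.ee ψ ((((-1 : ℂ) ^ (a 0 : ℕ) • famKron (Function.update (fun m => (1 : Matrix (Fin (d m)) (Fin (d m)) ℂ)) 0 (tildeA (A 0) 1)) - famKron (Function.update (fun n => A n 1) 0 (1 : Matrix (Fin (d 0)) (Fin (d 0)) ℂ))))ᴴ * (((-1 : ℂ) ^ (a 0 : ℕ) • famKron (Function.update (fun m => (1 : Matrix (Fin (d m)) (Fin (d m)) ℂ)) 0 (tildeA (A 0) 1)) - famKron (Function.update (fun n => A n 1) 0 (1 : Matrix (Fin (d 0)) (Fin (d 0)) ℂ)))))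
      + (∑ n ∈ Finset.univ.erase (0 : Fin N), BellAux.ee ψ (((((-1 : ℂ) ^ (a 0 : ℕ) * (-1 : ℂ) ^ (a n : ℕ)) • famKron (Function.update (fun m => (1 : Matrix (Fin (d m)) (Fin (d m)) ℂ)) 0 (tildeA (A 0) 0)) - famKron (Function.update (fun m => (1 : Matrix (Fin (d m)) (Fin (d m)) ℂ)) n (A n 0))))ᴴ * ((((-1 : ℂ) ^ (a 0 : ℕ) * (-1 : ℂ) ^ (a n : ℕ)) • famKron (Function.update (fun m => (1 : Matrix (Fin (d m)) (Fin (d m)) ℂ)) 0 (tildeA (A 0) 0)) - famKron (Function.update (fun m => (1 : Matrix (Fin (d m)) (Fin (d m)) ℂ)) n (A n 0))))))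
      + ((N:ℂ) - 1) * (BellAux.ee ψ ((1 : Matrix (∀ n, Fin (d n)) (∀ n, Fin (d n)) ℂ) - famKron (Function.update (fun m => (1 : Matrix (Fin (d m)) (Fin (d m)) ℂ)) 0 (A 0 0 * A 0 0))) + BellAux.ee ψ ((1 : Matrix (∀ n, Fin (d n)) (∀ n, Fin (d n)) ℂ) - famKron (Function.update (fun m => (1 : Matrix (Fin (d m)) (Fin (d m)) ℂ)) 0 (A 0 1 * A 0 1))))
      + ((N:ℂ) - 1) * BellAux.ee ψ ((1 : Matrix (∀ n, Fin (d n)) (∀ n, Fin (d n)) ℂ) - famKron (Function.update (fun n => A n 1 * A n 1) 0 (1 : Matrix (Fin (d 0)) (Fin (d 0)) ℂ)))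
      + (∑ n ∈ Finset.univ.erase (0 : Fin N), BellAux.ee ψ ((1 : Matrix (∀ n, Fin (d n)) (∀ n, Fin (d n)) ℂ) - famKron (Function.update (fun m => (1 : Matrix (Fin (d m)) (Fin (d m)) ℂ)) n (A n 0 * A n 0)))) = 0 := by
    rw [hu, hQsum, hR3sum, BellAux.ee_sub ψ (1 : Matrix (∀ n, Fin (d n)) (∀ n, Fin (d n)) ℂ) (famKron (Function.update (fun m => (1 : Matrix (Fin (d m)) (Fin (d m)) ℂ)) 0 (A 0 0 * A 0 0))),
      BellAux.ee_sub ψ (1 : Matrix (∀ n, Fin (d n)) (∀ n, Fin (d n)) ℂ) (famKron (Function.update (fun m => (1 : Matrix (Fin (d m)) (Fin (d m)) ℂ)) 0 (A 0 1 * A 0 1))), BellAux.ee_sub ψ (1 : Matrix (∀ n, Fin (d n)) (∀ n, Fin (d n)) ℂ) (famKron (Function.update (fun n => A n 1 * A n 1) 0 (1 : Matrix (Fin (d 0)) (Fin (d 0)) ℂ))),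
      BellAux.ee_one hψ]
    linear_combination (-((N:ℂ) - 1)) * hGsum - 2 * hmax'

  -- nonnegativity of all the terms
  have n1 : 0 ≤ BellAux.ee ψ ((((-1 : ℂ) ^ (a 0 : ℕ) • famKron (Function.update (fun m => (1 : Matrix (Fin (d m)) (Fin (d m)) ℂ)) 0 (tildeA (A 0) 1)) - famKron (Function.update (fun n => A n 1) 0 (1 : Matrix (Fin (d 0)) (Fin (d 0)) ℂ))))ᴴ * (((-1 : ℂ) ^ (a 0 : ℕ) • famKron (Function.update (fun m => (1 : Matrix (Fin (d m)) (Fin (d m)) ℂ)) 0 (tildeA (A 0) 1)) - famKron (Function.update (fun n => A n 1) 0 (1 : Matrix (Fin (d 0)) (Fin (d 0)) ℂ))))) :=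
    BellAux.ee_nonneg (Matrix.posSemidef_conjTranspose_mul_self _) ψ
  have n2 : ∀ n ∈ Finset.univ.erase (0 : Fin N), 0 ≤ BellAux.ee ψ (((((-1 : ℂ) ^ (a 0 : ℕ) * (-1 : ℂ) ^ (a n : ℕ)) • famKron (Function.update (fun m => (1 : Matrix (Fin (d m)) (Fin (d m)) ℂ)) 0 (tildeA (A 0) 0)) - famKron (Function.update (fun m => (1 : Matrix (Fin (d m)) (Fin (d m)) ℂ)) n (A n 0))))ᴴ * ((((-1 : ℂ) ^ (a 0 : ℕ) * (-1 : ℂ) ^ (a n : ℕ)) • famKron (Function.update (fun m => (1 : Matrix (Fin (d m)) (Fin (d m)) ℂ)) 0 (tildeA (A 0) 0)) - famKron (Function.update (fun m => (1 : Matrix (Fin (d m)) (Fin (d m)) ℂ)) n (A n 0))))) := fun n _ =>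
    BellAux.ee_nonneg (Matrix.posSemidef_conjTranspose_mul_self _) ψ
  have n3 : ∀ i : Fin 2, 0 ≤ BellAux.ee ψ ((1 : Matrix (∀ n, Fin (d n)) (∀ n, Fin (d n)) ℂ) - famKron (Function.update (fun m => (1 : Matrix (Fin (d m)) (Fin (d m)) ℂ)) 0 (A 0 i * A 0 i))) := fun i =>
    BellAux.ee_nonneg (pG i) ψ
  have n4 : 0 ≤ BellAux.ee ψ ((1 : Matrix (∀ n, Fin (d n)) (∀ n, Fin (d n)) ℂ) - famKron (Function.update (fun n => A n 1 * A n 1) 0 (1 : Matrix (Fin (d 0)) (Fin (d 0)) ℂ))) := BellAux.ee_nonneg pS1 ψ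
  have n5 : ∀ n ∈ Finset.univ.erase (0 : Fin N), 0 ≤ BellAux.ee ψ ((1 : Matrix (∀ n, Fin (d n)) (∀ n, Fin (d n)) ℂ) - famKron (Function.update (fun m => (1 : Matrix (Fin (d m)) (Fin (d m)) ℂ)) n (A n 0 * A n 0))) := fun n _ =>
    BellAux.ee_nonneg (pSN n) ψ
  obtain ⟨z1, z2, z3, z4, z5⟩ := BellAux.five_nonneg_sum_zero
    (mul_nonneg hNCnonneg n1) (Finset.sum_nonneg n2)
    (mul_nonneg hNCnonneg (add_nonneg (n3 0) (n3 1))) (mul_nonneg hNCnonneg n4)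
    (Finset.sum_nonneg n5) key
  have u0 : BellAux.ee ψ ((((-1 : ℂ) ^ (a 0 : ℕ) • famKron (Function.update (fun m => (1 : Matrix (Fin (d m)) (Fin (d m)) ℂ)) 0 (tildeA (A 0) 1)) - famKron (Function.update (fun n => A n 1) 0 (1 : Matrix (Fin (d 0)) (Fin (d 0)) ℂ))))ᴴ * (((-1 : ℂ) ^ (a 0 : ℕ) • famKron (Function.update (fun m => (1 : Matrix (Fin (d m)) (Fin (d m)) ℂ)) 0 (tildeA (A 0) 1)) - famKron (Function.update (fun n => A n 1) 0 (1 : Matrix (Fin (d 0)) (Fin (d 0)) ℂ))))) = 0 := by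
    rcases mul_eq_zero.mp z1 with h | h
    · exact absurd h hNC
    · exact h
  have hPψ : (((-1 : ℂ) ^ (a 0 : ℕ) • famKron (Function.update (fun m => (1 : Matrix (Fin (d m)) (Fin (d m)) ℂ)) 0 (tildeA (A 0) 1)) - famKron (Function.update (fun n => A n 1) 0 (1 : Matrix (Fin (d 0)) (Fin (d 0)) ℂ)))) *ᵥ ψ = 0 := BellAux.mulVec_eq_zero_of_ee_eq_zero u0
  have v0 := (Finset.sum_eq_zero_iff_of_nonneg n2).mp z2
  have hQψ : ∀ n ∈ Finset.univ.erase (0 : Fin N), ((((-1 : ℂ) ^ (a 0 : ℕ) * (-1 : ℂ) ^ (a n : ℕ)) • famKron (Function.update (fun m => (1 : Matrix (Fin (d m)) (Fin (d m)) ℂ)) 0 (tildeA (A 0) 0)) - famKron (Function.update (fun m => (1 : Matrix (Fin (d m)) (Fin (d m)) ℂ)) n (A n 0)))) *ᵥ ψ = 0 := fun n hn =>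
    BellAux.mulVec_eq_zero_of_ee_eq_zero (v0 n hn)
  have g12 : BellAux.ee ψ ((1 : Matrix (∀ n, Fin (d n)) (∀ n, Fin (d n)) ℂ) - famKron (Function.update (fun m => (1 : Matrix (Fin (d m)) (Fin (d m)) ℂ)) 0 (A 0 0 * A 0 0))) + BellAux.ee ψ ((1 : Matrix (∀ n, Fin (d n)) (∀ n, Fin (d n)) ℂ) - famKron (Function.update (fun m => (1 : Matrix (Fin (d m)) (Fin (d m)) ℂ)) 0 (A 0 1 * A 0 1))) = 0 := by
    rcases mul_eq_zero.mp z3 with h | h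
    · exact absurd h hNC
    · exact h
  obtain ⟨g0z, g1z⟩ := (add_eq_zero_iff_of_nonneg (n3 0) (n3 1)).mp g12
  have hG0ψ : ((1 : Matrix (∀ n, Fin (d n)) (∀ n, Fin (d n)) ℂ) - famKron (Function.update (fun m => (1 : Matrix (Fin (d m)) (Fin (d m)) ℂ)) 0 (A 0 0 * A 0 0))) *ᵥ ψ = 0 :=
    BellAux.mulVec_eq_zero_of_posSemidef_ee (pG 0) g0z
  have hG1ψ : ((1 : Matrix (∀ n, Fin (d n)) (∀ n, Fin (d n)) ℂ) - famKron (Function.update (fun m => (1 : Matrix (Fin (d m)) (Fin (d m)) ℂ)) 0 (A 0 1 * A 0 1))) *ᵥ ψ = 0 :=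
    BellAux.mulVec_eq_zero_of_posSemidef_ee (pG 1) g1z
  have s1z : BellAux.ee ψ ((1 : Matrix (∀ n, Fin (d n)) (∀ n, Fin (d n)) ℂ) - famKron (Function.update (fun n => A n 1 * A n 1) 0 (1 : Matrix (Fin (d 0)) (Fin (d 0)) ℂ))) = 0 := by
    rcases mul_eq_zero.mp z4 with h | h
    · exact absurd h hNC
    · exact h
  have hS1ψ : ((1 : Matrix (∀ n, Fin (d n)) (∀ n, Fin (d n)) ℂ) - famKron (Function.update (fun n => A n 1 * A n 1) 0 (1 : Matrix (Fin (d 0)) (Fin (d 0)) ℂ))) *ᵥ ψ = 0 :=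
    BellAux.mulVec_eq_zero_of_posSemidef_ee pS1 s1z
  have hSNψ : ∀ n ∈ Finset.univ.erase (0 : Fin N), ((1 : Matrix (∀ n, Fin (d n)) (∀ n, Fin (d n)) ℂ) - famKron (Function.update (fun m => (1 : Matrix (Fin (d m)) (Fin (d m)) ℂ)) n (A n 0 * A n 0))) *ᵥ ψ = 0 := fun n hn =>
    BellAux.mulVec_eq_zero_of_posSemidef_ee (pSN n)
      ((Finset.sum_eq_zero_iff_of_nonneg n5).mp z5 n hn)
  -- final assembly
  refine ⟨?_, ?_, ?_, ?_, ?_⟩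
  · rw [Matrix.sub_mulVec] at hPψ
    exact sub_eq_zero.mp hPψ
  · intro n hn
    have h := hQψ n (Finset.mem_erase.mpr ⟨hn, Finset.mem_univ n⟩)
    rw [Matrix.sub_mulVec] at h
    rw [pow_add]
    exact sub_eq_zero.mp h
  · have key2 : ∀ j : Fin 2, ((1 : Matrix (∀ n, Fin (d n)) (∀ n, Fin (d n)) ℂ) - famKron (Function.update (fun m => (1 : Matrix (Fin (d m)) (Fin (d m)) ℂ)) 0 (A 0 j * A 0 j))) *ᵥ ψ = 0 →
        (famKron (Function.update (fun m => (1 : Matrix (Fin (d m)) (Fin (d m)) ℂ)) 0 (A 0 j * A 0 j))) *ᵥ ψ = ψ := by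
      intro j hj
      rw [Matrix.sub_mulVec, Matrix.one_mulVec, sub_eq_zero] at hj
      exact hj.symm
    intro i
    fin_cases i
    · exact key2 0 hG0ψ
    · exact key2 1 hG1ψ
  · rw [Matrix.sub_mulVec, Matrix.one_mulVec, sub_eq_zero] at hS1ψ
    exact hS1ψ.symm
  · intro n hn
    have h := hSNψ n (Finset.mem_erase.mpr ⟨hn, Finset.mem_univ n⟩)
    rw [Matrix.sub_mulVec, Matrix.one_mulVec, sub_eq_zero] at h
    exact h.symm

end
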